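/- Every uniquely k-colorable graph G has at least (k-1)|V(G)| - k(k-1)/2 edges. -/

import Mathlib

open SimpleGraph

/-- `G` is uniquely `k`-colorable: its chromatic number is `k` and all proper
`k`-colorings induce the same partition of the vertex set into color classes. -/
def UniquelyKColorable {V : Type} (G : SimpleGraph V) (k : ℕ) : Prop :=
  G.chromaticNumber = k ∧
    ∀ c₁ c₂ : G.Coloring (Fin k), ∀ u v : V, c₁ u = c₁ v ↔ c₂ u = c₂ v

/-- `G` is an edge-critical uniquely `k`-colorable graph. -/
def EdgeCritical {V : Type} (G : SimpleGraph V) (k : ℕ) : Prop :=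
  UniquelyKColorable G k ∧
    ∀ e ∈ G.edgeSet, ¬ UniquelyKColorable (G.deleteEdges {e}) k

/-- A combinatorial plane embedding of `G`: a family of faces, each with a closed
boundary walk, such that every edge lies on face boundaries exactly twice in total,
and Euler's formula holds. -/
structure PlaneEmbedding {V : Type} [DecidableEq V] (G : SimpleGraph V) where
  Faces : Type
  [facesFintype : Fintype Faces]
  boundary : Faces → Σ v : V, G.Walk v v
  edge_count : ∀ e ∈ G.edgeSet, (∑ f : Faces, ((boundary f).2.edges.count e)) = 2
  euler : Nat.card V + Nat.card Faces = G.edgeSet.ncard + 1 + Nat.card G.ConnectedComponent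

attribute [instance] PlaneEmbedding.facesFintype

/-- The degree of a face: the length of its boundary walk (cut edges counted twice). -/
def PlaneEmbedding.fdeg {V : Type} [DecidableEq V] {G : SimpleGraph V}
    (emb : PlaneEmbedding G) (f : emb.Faces) : ℕ :=
  (emb.boundary f).2.length

def Planar {V : Type} [DecidableEq V] (G : SimpleGraph V) : Prop :=
  Nonempty (PlaneEmbedding G)

/-- Outerplanar: a plane embedding with one face incident with all vertices. -/
def Outerplanar {V : Type} [DecidableEq V] (G : SimpleGraph V) : Prop :=
  ∃ emb : PlaneEmbedding G, ∃ f : emb.Faces, ∀ v : V, v ∈ (emb.boundary f).2.support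

def MaximalOuterplanar {V : Type} [DecidableEq V] (G : SimpleGraph V) : Prop :=
  Outerplanar G ∧ ∀ u v : V, u ≠ v → ¬ G.Adj u v →
    ¬ Outerplanar (G ⊔ SimpleGraph.fromEdgeSet {s(u, v)})

/-- `s` is the edge set of a cycle of `G`. -/
def IsCycleSet {V : Type} (G : SimpleGraph V) (s : Set (Sym2 V)) : Prop :=
  ∃ (v : V) (w : G.Walk v v), w.IsCycle ∧ {e | e ∈ w.edges} = s

/-- Two cycles (given by their edge sets) are dependent: joined by a chain of cycles
in which consecutive cycles share an edge and all intermediate cycles have 4 vertices. -/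
def Dependent {V : Type} (G : SimpleGraph V) (s s' : Set (Sym2 V)) : Prop :=
  ∃ (t : ℕ) (C : Fin (t + 2) → Set (Sym2 V)),
    (∀ i, IsCycleSet G (C i)) ∧ C 0 = s ∧ C (Fin.last (t + 1)) = s' ∧
    (∀ i : Fin (t + 1), (C i.castSucc ∩ C i.succ).Nonempty) ∧
    ∀ i : Fin (t + 2), i ≠ 0 → i ≠ Fin.last (t + 1) → (C i).ncard = 4

/-- `G` has no separating 3-cycle: deleting the vertices of any triangle leaves a
connected graph. -/
def NoSeparating3Cycle {V : Type} (G : SimpleGraph V) : Prop :=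
  ∀ s : Finset V, G.IsNClique 3 s → (G.induce {v : V | v ∉ s}).Connected

/-- `H` is a triangle-subgraph of `G`: the union of a sequence of triangles each of
which (after the first) shares an edge with an earlier one. -/
def IsTriangleSubgraph {V : Type} (G : SimpleGraph V) (H : G.Subgraph) : Prop :=
  ∃ (t : ℕ) (T : Fin (t + 1) → Finset V),
    (∀ i, G.IsNClique 3 (T i)) ∧
    (∀ j : Fin (t + 1), j ≠ 0 →
      ∃ i : Fin (t + 1), i < j ∧ ((T i : Set V) ∩ (T j : Set V)).ncard = 2) ∧
    H = ⨆ i, (⊤ : G.Subgraph).induce (T i : Set V)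

def MaximalTriangleSubgraph {V : Type} (G : SimpleGraph V) (H : G.Subgraph) : Prop :=
  IsTriangleSubgraph G H ∧ ∀ H' : G.Subgraph, IsTriangleSubgraph G H' → ¬ H < H'

/-- The set of edges of `G` with one end in `A` and the other in `B`. -/
def edgesBetween {V : Type} (G : SimpleGraph V) (A B : Set V) : Set (Sym2 V) :=
  {e | ∃ a ∈ A, ∃ b ∈ B, G.Adj a b ∧ e = s(a, b)}
section UkcAux

lemma ukc_reach_del {W : Type} {G : SimpleGraph W} {v w : W}
    (hr : (G \ fromEdgeSet {s(v, w)}).Reachable v w)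
    {a b : W} (p : G.Walk a b) : (G \ fromEdgeSet {s(v, w)}).Reachable a b := by
  induction p with
  | nil => exact Reachable.refl _
  | @cons x y z h q ih =>
    refine Reachable.trans ?_ ih
    by_cases he : s(x, y) = s(v, w)
    · rw [Sym2.eq_iff] at he
      rcases he with ⟨rfl, rfl⟩ | ⟨rfl, rfl⟩
      · exact hr
      · exact hr.symm
    · exact Adj.reachable (by simp [h, he, h.ne])

lemma ukc_conn_card_le {W : Type} [Fintype W] :
    ∀ (n : ℕ) (G : SimpleGraph W) [Fintype G.edgeSet],
    G.edgeFinset.card ≤ n → G.Connected → Fintype.card W ≤ G.edgeFinset.card + 1 := by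
  intro n
  induction n with
  | zero =>
    intro G _ hn hc
    by_cases hac : G.IsAcyclic
    · exact le_of_eq ((IsTree.card_edgeFinset ⟨hc, hac⟩).symm)
    · exfalso
      simp only [IsAcyclic, not_forall, not_not] at hac
      obtain ⟨v, c, hcyc⟩ := hac
      have : c.length ≤ G.edgeFinset.card := by
        simpa using hcyc.isTrail.length_le_card_edgeFinset
      have h3 := hcyc.three_le_length
      omega
  | succ n ih =>
    intro G _ hn hc
    by_cases hac : G.IsAcyclic
    · exact le_of_eq ((IsTree.card_edgeFinset ⟨hc, hac⟩).symm)
    · classical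
      simp only [IsAcyclic, not_forall, not_not] at hac
      obtain ⟨u, c, hcyc⟩ := hac
      have hlen := hcyc.three_le_length
      obtain ⟨e, he⟩ : ∃ e, e ∈ c.edges := by
        cases hee : c.edges with
        | nil => simp [← Walk.length_edges, hee] at hlen
        | cons a l => exact ⟨a, by simp [hee]⟩
      obtain ⟨v, w⟩ := e
      have hadj : G.Adj v w := c.adj_of_mem_edges he
      have hreach : (G \ fromEdgeSet {s(v, w)}).Reachable v w :=
        (adj_and_reachable_delete_edges_iff_exists_cycle.mpr ⟨u, c, hcyc, he⟩).2
      set G' := G \ fromEdgeSet {s(v, w)} with hG'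
      have hle : G' ≤ G := by simp [hG']
      have hc' : G'.Connected := by
        rw [connected_iff] at hc ⊢
        refine ⟨fun a b => ?_, hc.2⟩
        exact ukc_reach_del hreach (hc.1 a b).some
      have hsub : G'.edgeFinset ⊂ G.edgeFinset := by
        refine Finset.ssubset_iff_of_subset (by simpa using edgeFinset_mono hle) |>.mpr ?_
        refine ⟨s(v, w), by simpa using hadj, ?_⟩
        simp [hG']
      have hcard : G'.edgeFinset.card < G.edgeFinset.card := Finset.card_lt_card hsub
      have := ih G' (by omega) hc'
      omega

lemma ukc_color_surj {V : Type} [Fintype V] {G : SimpleGraph V} {k : ℕ}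
    (hχ : G.chromaticNumber = k) (c : G.Coloring (Fin k)) : Function.Surjective c := by
  classical
  by_contra hns
  rw [Function.Surjective] at hns
  push_neg at hns
  obtain ⟨i, hi⟩ := hns
  have c' : G.Coloring (Set.range c) :=
    Coloring.mk (fun v => ⟨c v, Set.mem_range_self v⟩)
      (fun h => by simpa [Subtype.ext_iff] using fun hh => c.valid h hh)
  have hcol : G.Colorable (Fintype.card (Set.range c)) := c'.colorable
  have hlt : Fintype.card (Set.range c) < k := by
    have hss : (Set.range c).toFinset ⊂ Finset.univ := by
      rw [Finset.ssubset_univ_iff]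
      intro h
      have : i ∈ Set.range c := by rw [Set.toFinset_eq_univ.mp h]; trivial
      obtain ⟨y, hy⟩ := this
      exact hi y hy
    calc Fintype.card (Set.range c) = (Set.range c).toFinset.card := (Set.toFinset_card _).symm
      _ < Finset.univ.card := Finset.card_lt_card hss
      _ = k := by simp
  have := hcol.chromaticNumber_le
  rw [hχ, Nat.cast_le] at this
  omega

lemma ukc_two_class_conn {V : Type} [Fintype V] {G : SimpleGraph V} {k : ℕ}
    (hG : UniquelyKColorable G k)
    (hsurj : ∀ c : G.Coloring (Fin k), Function.Surjective c)
    (c : G.Coloring (Fin k)) (i j : Fin k) (hij : i ≠ j) :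
    (G.induce {v | c v = i ∨ c v = j}).Connected := by
  classical
  set S : Set V := {v | c v = i ∨ c v = j} with hS
  rw [connected_iff]
  constructor
  · rintro ⟨u, hu⟩ ⟨w, hw⟩
    by_contra hnr
    set X : Set V := {v | ∃ h : v ∈ S, (G.induce S).Reachable ⟨u, hu⟩ ⟨v, h⟩} with hX
    have hXS : X ⊆ S := fun v hv => hv.1
    have key : ∀ a b : V, a ∈ X → G.Adj a b → b ∈ S → b ∈ X := by
      rintro a b ⟨haS, har⟩ hab hbS
      refine ⟨hbS, har.trans (Adj.reachable ?_)⟩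
      exact (comap_adj).mpr (by simpa using hab)
    set σ := Equiv.swap i j with hσ
    have hmemS : ∀ {v}, v ∈ S → c v = i ∨ c v = j := fun h => h
    have hσmem : ∀ {x : Fin k}, x = i ∨ x = j → (σ x = i ∨ σ x = j) := by
      rintro x (rfl | rfl) <;> simp [hσ, Equiv.swap_apply_left, Equiv.swap_apply_right]
    have c'valid : ∀ {a b : V}, G.Adj a b →
        (if a ∈ X then σ (c a) else c a) ≠ (if b ∈ X then σ (c b) else c b) := by
      intro a b hab
      have hcab : c a ≠ c b := c.valid hab
      by_cases ha : a ∈ X <;> by_cases hb : b ∈ X <;> simp only [ha, hb, if_pos, if_neg,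
        if_true, if_false]
      · exact fun h => hcab (σ.injective h)
      · have hbS : b ∉ S := fun hbS => hb (key a b ha hab hbS)
        intro h
        rcases hσmem (hmemS (hXS ha)) with h' | h' <;> rw [h] at h' <;>
          exact hbS (by rw [hS]; simp [h'])
      · have haS : a ∉ S := fun haS => ha (key b a hb hab.symm haS)
        intro h
        rcases hσmem (hmemS (hXS hb)) with h' | h' <;> rw [← h] at h' <;>
          exact haS (by rw [hS]; simp [h'])
      · exact hcab
    let c' : G.Coloring (Fin k) :=
      Coloring.mk (fun v => if v ∈ X then σ (c v) else c v) c'valid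
    have huX : u ∈ X := ⟨hu, Reachable.refl _⟩
    have hwX : w ∉ X := fun hwx => hnr (by
      obtain ⟨h, hr⟩ := hwx
      exact hr)
    have h := hG.2 c c' u w
    have hc'u : c' u = σ (c u) := by
      show (if u ∈ X then σ (c u) else c u) = σ (c u)
      rw [if_pos huX]
    have hc'w : c' w = c w := by
      show (if w ∈ X then σ (c w) else c w) = c w
      rw [if_neg hwX]
    have hσu : σ (c u) ≠ c u := by
      rcases hmemS hu with h' | h' <;> rw [h'] <;> simp [hσ, hij, hij.symm]
    by_cases hcw : c u = c w
    · have := h.mp hcw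
      rw [hc'u, hc'w, ← hcw] at this
      exact hσu this
    · have hσuw : σ (c u) = c w := by
        rcases hmemS hu with h1 | h1 <;> rcases hmemS hw with h2 | h2 <;>
          rw [h1, h2] <;> first
            | (exfalso; exact hcw (h1.trans h2.symm))
            | simp [hσ]
      exact hcw (h.mpr (by rw [hc'u, hc'w, hσuw]))
  · obtain ⟨v, hv⟩ := hsurj c i
    exact ⟨⟨v, Or.inl hv⟩⟩

lemma ukc_pair_count {k : ℕ} (x : Fin k) :
    ((Finset.univ.filter (fun p : Sym2 (Fin k) => ¬ p.IsDiag)).filter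
      (fun p => x ∈ p)).card = k - 1 := by
  classical
  have hbij : (Finset.univ.erase x).card =
      ((Finset.univ.filter (fun p : Sym2 (Fin k) => ¬ p.IsDiag)).filter
        (fun p => x ∈ p)).card := by
    apply Finset.card_bij (fun y _ => s(x, y))
    · intro y hy
      rw [Finset.mem_erase] at hy
      simp only [Finset.mem_filter, Finset.mem_univ, true_and, Sym2.isDiag_iff_proj_eq,
        Sym2.mem_iff]
      exact ⟨fun h => hy.1 h.symm, Or.inl trivial⟩
    · intro y hy y' hy' h
      rw [Finset.mem_erase] at hy hy'
      rw [Sym2.eq_iff] at h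
      rcases h with ⟨-, h⟩ | ⟨-, h⟩
      · exact h
      · exact absurd h hy.1
    · intro p hp
      simp only [Finset.mem_filter, Finset.mem_univ, true_and] at hp
      obtain ⟨hd, hx⟩ := hp
      induction p with
      | _ a b =>
        rw [Sym2.mem_iff] at hx
        rw [Sym2.isDiag_iff_proj_eq] at hd
        rcases hx with rfl | rfl
        · exact ⟨b, by simp [Ne.symm hd], rfl⟩
        · exact ⟨a, by simp [hd], Sym2.eq_swap⟩
  rw [← hbij, Finset.card_erase_of_mem (Finset.mem_univ x)]
  simp

end UkcAux

/-- A uniquely `k`-colorable graph has at least `(k-1)|V| - k(k-1)/2` edges. -/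
theorem stmt_1 {V : Type} [Fintype V] (G : SimpleGraph V) (k : ℕ)
    (hG : UniquelyKColorable G k) :
    ((k : ℤ) - 1) * (Fintype.card V : ℤ) - (k : ℤ) * ((k : ℤ) - 1) / 2 ≤
      (G.edgeSet.ncard : ℤ) := by
  classical
  by_cases hk0 : k = 0
  · subst hk0
    have h1 : (0:ℤ) ≤ (G.edgeSet.ncard : ℤ) := Int.natCast_nonneg _
    have h2 : (0:ℤ) ≤ (Fintype.card V : ℤ) := Int.natCast_nonneg _
    push_cast
    norm_num
    try linarith
  · have hk1 : 1 ≤ k := Nat.one_le_iff_ne_zero.mpr hk0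
    obtain ⟨c⟩ : G.Colorable k := chromaticNumber_le_iff_colorable.mp (le_of_eq hG.1)
    have hsurj : ∀ c : G.Coloring (Fin k), Function.Surjective c :=
      fun c => ukc_color_surj hG.1 c
    set P : Finset (Sym2 (Fin k)) := Finset.univ.filter (fun p => ¬ p.IsDiag) with hP
    set E := G.edgeFinset with hE
    have hmap : ∀ e ∈ E, Sym2.map c e ∈ P := by
      intro e he
      rw [hE, mem_edgeFinset] at he
      induction e with
      | _ a b =>
        simp only [Sym2.map_pair_eq, hP, Finset.mem_filter, Finset.mem_univ, true_and,
          Sym2.isDiag_iff_proj_eq]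
        exact c.valid he
    have hsplit : E.card = ∑ p ∈ P, (E.filter (fun e => Sym2.map c e = p)).card :=
      Finset.card_eq_sum_card_fiberwise hmap
    set nn : Sym2 (Fin k) → ℕ :=
      fun p => (Finset.univ.filter (fun v : V => c v ∈ p)).card with hnn
    have hfiber : ∀ p ∈ P, (nn p : ℤ) - 1 ≤
        ((E.filter (fun e => Sym2.map c e = p)).card : ℤ) := by
      intro p hp
      induction p with
      | _ a b =>
        have hab : a ≠ b := by
          simpa [hP, Sym2.isDiag_iff_proj_eq] using hp
        set S : Set V := {v | c v = a ∨ c v = b} with hS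
        have hconn := ukc_two_class_conn hG hsurj c a b hab
        have h1 : Fintype.card S ≤ (G.induce S).edgeFinset.card + 1 :=
          ukc_conn_card_le _ (G.induce S) le_rfl hconn
        have h2 : (G.induce S).edgeFinset.card ≤
            (E.filter (fun e => Sym2.map c e = s(a, b))).card := by
          apply Finset.card_le_card_of_injOn (Sym2.map Subtype.val)
          · intro e' he'
            rw [Finset.mem_coe, mem_edgeFinset] at he'
            induction e' with
            | _ x y =>
              have hadj : G.Adj x.1 y.1 := he'
              simp only [Sym2.map_pair_eq, Finset.mem_coe, Finset.mem_filter, hE, mem_edgeFinset, mem_edgeSet]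
              refine ⟨hadj, ?_⟩
              have hcxy : c x.1 ≠ c y.1 := c.valid hadj
              rcases x.2 with hx | hx <;> rcases y.2 with hy | hy <;> rw [hx, hy] <;>
                first
                  | rfl
                  | exact Sym2.eq_swap
                  | exact absurd (hx.trans hy.symm) hcxy
          · exact ((Sym2.map.injective Subtype.val_injective).injOn)
        have h3 : Fintype.card S = nn s(a, b) := by
          rw [hnn]
          rw [Fintype.card_subtype]
          congr 1
          apply Finset.filter_congr
          intro v _
          simp [hS, Sym2.mem_iff]
        have := h1.trans (Nat.add_le_add_right h2 1)
        rw [h3] at this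
        push_cast
        omega
    have hsum1 : ∑ p ∈ P, nn p = Fintype.card V * (k - 1) := by
      simp only [hnn, Finset.card_filter]
      rw [Finset.sum_comm]
      have : ∀ v : V, (∑ p ∈ P, if c v ∈ p then 1 else 0) = k - 1 := by
        intro v
        rw [← Finset.card_filter]
        exact ukc_pair_count (c v)
      rw [Finset.sum_congr rfl (fun v _ => this v)]
      simp [Finset.card_univ, mul_comm]
    have hPcard : P.card = k.choose 2 := by
      have hsub := Sym2.card_subtype_not_diag (α := Fin k)
      rw [Fintype.card_subtype] at hsub
      simpa [hP] using hsub
    have hchoose : 2 * k.choose 2 = k * (k - 1) := by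
      have hdvd : 2 ∣ k * (k - 1) := by
        have hadd : k - 1 + 1 = k := Nat.sub_add_cancel hk1
        have he := Nat.even_mul_succ_self (k - 1)
        rw [hadd] at he
        rw [mul_comm]
        exact he.two_dvd
      rw [Nat.choose_two_right, Nat.mul_div_cancel' hdvd]
    -- combine in ℤ
    have hchain : (∑ p ∈ P, ((nn p : ℤ) - 1)) ≤ (E.card : ℤ) := by
      rw [hsplit]
      push_cast
      exact Finset.sum_le_sum hfiber
    rw [Finset.sum_sub_distrib, Finset.sum_const, nsmul_eq_mul, mul_one] at hchain
    have hsumZ : (∑ p ∈ P, (nn p : ℤ)) = (Fintype.card V : ℤ) * ((k : ℤ) - 1) := by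
      rw [← Nat.cast_sum, hsum1]
      push_cast [Nat.cast_sub hk1]
      ring
    have hdivZ : (k : ℤ) * ((k : ℤ) - 1) / 2 = (k.choose 2 : ℤ) := by
      have : (k : ℤ) * ((k : ℤ) - 1) = 2 * (k.choose 2 : ℤ) := by
        have := congrArg (fun n : ℕ => (n : ℤ)) hchoose
        push_cast [Nat.cast_sub hk1] at this
        linarith
      rw [this, Int.mul_ediv_cancel_left _ (by norm_num)]
    have hnc : (G.edgeSet.ncard : ℤ) = (E.card : ℤ) := by
      rw [hE, Set.ncard_eq_toFinset_card']
      exact congrArg (fun s : Finset (Sym2 V) => (s.card : ℤ)) (Set.toFinset_congr rfl)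
    rw [hnc, hdivZ]
    rw [hsumZ, hPcard] at hchain
    linarith
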